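/- For the alternating charge configuration with charges (+1,−1,+1,−1) at z-coordinates (1/8, 3/8, 5/8, 7/8) on the line x=y=1/2 in the unit cube, periodically extended in z with period 1, the potential at the location of either positive charge (summing over all other charges and all images) equals 4·M_{1D} = −8·ln 2. -/

import Mathlib

open Filter

/-- Euclidean norm on `ℝ³` represented as `Fin 3 → ℝ`. -/
noncomputable def euclNorm (v : Fin 3 → ℝ) : ℝ := Real.sqrt (∑ i, v i ^ 2)

/-- The unit vector in the `z` direction. -/
def ez : Fin 3 → ℝ := ![0, 0, 1]

/-- Charges `(+1, -1, +1, -1)`. -/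
def madCharge : Fin 4 → ℝ := ![1, -1, 1, -1]

/-- Source positions `(1/2, 1/2, zₛ)` with `z`-coordinates `(1/8, 3/8, 5/8, 7/8)`. -/
noncomputable def madPos : Fin 4 → (Fin 3 → ℝ) :=
  fun s => ![1/2, 1/2, ![ (1:ℝ)/8, 3/8, 5/8, 7/8] s]

open Finset Real Topology

section Aux

noncomputable def ff (k : ℤ) : ℝ :=
  if k = 0 then 0 else (if k % 2 = 0 then 4 else -4) / |(k : ℝ)|

lemma ff_neg (k : ℤ) : ff (-k) = ff k := by
  unfold ff
  rcases eq_or_ne k 0 with rfl | hk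
  · simp
  · rw [if_neg (by omega), if_neg hk, show ((-k : ℤ) : ℝ) = -(k : ℝ) by push_cast; ring, abs_neg]
    by_cases h : k % 2 = 0
    · rw [if_pos (by omega), if_pos h]
    · rw [if_neg (by omega), if_neg h]

lemma ff_even {k : ℤ} (h2 : k % 2 = 0) (hk : 0 < k) : ff k = 4 / (k : ℝ) := by
  unfold ff
  rw [if_neg (by omega), if_pos h2, abs_of_pos (by exact_mod_cast hk)]

lemma ff_odd {k : ℤ} (h2 : k % 2 = 1) (hk : 0 < k) : ff k = -4 / (k : ℝ) := by
  unfold ff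
  rw [if_neg (by omega), if_neg (by omega), abs_of_pos (by exact_mod_cast hk)]

lemma ff_even' {k : ℤ} (hk : k ≠ 0) (h2 : k % 2 = 0) : ff k = 4 / |(k : ℝ)| := by
  unfold ff; rw [if_neg hk, if_pos h2]

lemma ff_odd' {k : ℤ} (h2 : k % 2 = 1) : ff k = -4 / |(k : ℝ)| := by
  unfold ff; rw [if_neg (by omega), if_neg (by omega)]

noncomputable def Apart (N : ℕ) : ℝ := ∑ k ∈ Finset.range N, ff ((k : ℤ) + 1)

lemma Apart_succ (N : ℕ) : Apart (N + 1) = Apart N + ff ((N : ℤ) + 1) :=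
  Finset.sum_range_succ _ _

noncomputable def hR (M : ℕ) : ℝ := ∑ i ∈ Finset.range M, 1 / ((i : ℝ) + 1)

lemma Apart_two_mul (M : ℕ) : Apart (2 * M) = 4 * (hR M - hR (2 * M)) := by
  induction M with
  | zero => simp [Apart, hR]
  | succ M ih =>
    unfold Apart hR at *
    rw [show 2 * (M + 1) = (2 * M + 1) + 1 by ring]
    rw [Finset.sum_range_succ (f := fun k => ff ((k : ℤ) + 1)),
      Finset.sum_range_succ (f := fun k => ff ((k : ℤ) + 1)),
      Finset.sum_range_succ (f := fun i => 1 / ((i : ℝ) + 1)) (n := 2 * M + 1),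
      Finset.sum_range_succ (f := fun i => 1 / ((i : ℝ) + 1)) (n := 2 * M),
      Finset.sum_range_succ (f := fun i => 1 / ((i : ℝ) + 1)) (n := M), ih]
    have e1 : ff ((((2:ℕ) * M : ℕ) : ℤ) + 1) = -4 / (2 * (M : ℝ) + 1) := by
      rw [ff_odd (by omega) (by omega)]; push_cast; ring_nf
    have e2 : ff ((((2:ℕ) * M + 1 : ℕ) : ℤ) + 1) = 4 / (2 * (M : ℝ) + 2) := by
      rw [ff_even (by omega) (by omega)]; push_cast; ring_nf
    rw [e1, e2]
    push_cast
    have p1 : (2 * (M : ℝ) + 1) ≠ 0 := by positivity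
    have p2 : (2 * (M : ℝ) + 2) ≠ 0 := by positivity
    have p3 : ((M : ℝ) + 1) ≠ 0 := by positivity
    field_simp
    ring

lemma hR_eq (M : ℕ) : hR M = (harmonic M : ℝ) := by
  unfold hR harmonic
  push_cast
  simp [one_div]

lemma tendsto_two_mul : Tendsto (fun M : ℕ => 2 * M) atTop atTop := by
  apply tendsto_atTop_atTop.mpr
  exact fun b => ⟨b, fun a ha => by omega⟩

lemma tendsto_hR_diff :
    Tendsto (fun M : ℕ => hR M - hR (2 * M)) atTop (𝓝 (-Real.log 2)) := by
  have h1 : Tendsto (fun M : ℕ => ((harmonic M : ℝ) - Real.log M)) atTop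
      (𝓝 Real.eulerMascheroniConstant) := Real.tendsto_harmonic_sub_log
  have h2 : Tendsto (fun M : ℕ => ((harmonic (2 * M) : ℝ) - Real.log (2 * M))) atTop
      (𝓝 Real.eulerMascheroniConstant) := by
    have := Real.tendsto_harmonic_sub_log.comp tendsto_two_mul
    simpa [Function.comp_def] using this
  have h3 := (h1.sub h2).add_const (-Real.log 2)
  rw [sub_self, zero_add] at h3
  apply h3.congr'
  filter_upwards [eventually_ge_atTop 1] with M hM
  have hM0 : ((M : ℝ)) ≠ 0 := Nat.cast_ne_zero.mpr (by omega)
  rw [hR_eq, hR_eq]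
  have h4 : Real.log (2 * (M : ℝ)) = Real.log 2 + Real.log M :=
    Real.log_mul (by norm_num) hM0
  rw [h4]
  ring

lemma tendsto_Apart_two : Tendsto (fun M : ℕ => Apart (2 * M)) atTop (𝓝 (-4 * Real.log 2)) := by
  have := tendsto_hR_diff.const_mul (4 : ℝ)
  simp only [Apart_two_mul]
  convert this using 2
  ring

lemma tendsto_Apart_four : Tendsto (fun n : ℕ => Apart (4 * n)) atTop (𝓝 (-4 * Real.log 2)) := by
  have := tendsto_Apart_two.comp tendsto_two_mul
  simp only [Function.comp_def] at this
  apply this.congr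
  intro n
  congr 1
  ring

lemma ff_bound {k : ℤ} {c : ℝ} (hc : 0 < c) (h : c ≤ |(k : ℝ)|) : ‖ff k‖ ≤ 4 / c := by
  unfold ff
  have hk : k ≠ 0 := by
    rintro rfl
    simp only [Int.cast_zero, abs_zero] at h
    linarith
  rw [if_neg hk]
  have habs : (0:ℝ) < |(k : ℝ)| := lt_of_lt_of_le hc h
  by_cases h2 : k % 2 = 0
  · rw [if_pos h2, Real.norm_eq_abs, abs_div, abs_abs, show |(4:ℝ)| = 4 by norm_num]
    gcongr
  · rw [if_neg h2, Real.norm_eq_abs, abs_div, abs_abs, show |(-4:ℝ)| = 4 by norm_num]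
    gcongr

lemma tendsto_ff_tail (j : ℕ) (hj : 1 ≤ j) : Tendsto (fun n : ℕ => ff (4 * (n : ℤ) + j)) atTop (𝓝 0) := by
  have hb : Tendsto (fun n : ℕ => 4 / ((n : ℝ) + 1)) atTop (𝓝 0) := by
    have := tendsto_one_div_add_atTop_nhds_zero_nat.const_mul (4 : ℝ)
    simpa [div_eq_mul_inv, one_div] using this
  apply squeeze_zero_norm _ hb
  intro n
  apply ff_bound (by positivity)
  have : ((4 * (n : ℤ) + j : ℤ) : ℝ) = 4 * (n : ℝ) + j := by push_cast; ring
  rw [this, abs_of_nonneg (by positivity)]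
  have h1 : (1:ℝ) ≤ (j : ℝ) := by exact_mod_cast hj
  have hn : (0:ℝ) ≤ (n : ℝ) := Nat.cast_nonneg n
  nlinarith

lemma Icc_succ (n : ℕ) : Finset.Icc (-((n:ℤ)+1)) ((n:ℤ)+1)
    = insert (-((n:ℤ)+1)) (insert ((n:ℤ)+1) (Finset.Icc (-(n:ℤ)) (n:ℤ))) := by
  ext k; simp; omega

lemma sum0 (n : ℕ) :
    ∑ m ∈ Finset.Icc (-(n:ℤ)) (n:ℤ), (ff (4*m) + ff (4*m+1) + ff (4*m+2) + ff (4*m+3))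
    = 2 * Apart (4*n) + (ff (4*(n:ℤ)+1) + ff (4*(n:ℤ)+2) + ff (4*(n:ℤ)+3)) := by
  induction n with
  | zero =>
    norm_num [Apart]
    simp [ff]
  | succ n ih =>
    have hc : ((n+1 : ℕ) : ℤ) = (n : ℤ) + 1 := by push_cast; ring
    rw [hc, Icc_succ, Finset.sum_insert (by simp only [Finset.mem_insert, Finset.mem_Icc]; omega),
      Finset.sum_insert (by simp only [Finset.mem_Icc]; omega), ih]
    have h4 : 4*(n+1) = 4*n+1+1+1+1 := by ring
    rw [h4, Apart_succ, Apart_succ, Apart_succ, Apart_succ]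
    push_cast
    rw [show 4 * -((n:ℤ) + 1) + 1 = -(4*n+3) by ring, ff_neg,
        show 4 * -((n:ℤ) + 1) + 2 = -(4*n+2) by ring, ff_neg,
        show 4 * -((n:ℤ) + 1) + 3 = -(4*n+1) by ring, ff_neg,
        show 4 * -((n:ℤ) + 1) = -(4*n+4) by ring, ff_neg,
        show 4 * ((n:ℤ) + 1) = 4*n+4 by ring,
        show 4 * (n:ℤ) + 4 + 1 = 4*n+5 by ring,
        show 4 * (n:ℤ) + 4 + 2 = 4*n+6 by ring,
        show 4 * (n:ℤ) + 4 + 3 = 4*n+7 by ring,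
        show 4 * (n:ℤ) + 1 + 1 = 4*n+2 by ring,
        show 4 * (n:ℤ) + 2 + 1 = 4*n+3 by ring,
        show 4 * (n:ℤ) + 3 + 1 = 4*n+4 by ring]
    ring

lemma sum2 (n : ℕ) :
    ∑ m ∈ Finset.Icc (-(n:ℤ)) (n:ℤ), (ff (4*m-2) + ff (4*m-1) + ff (4*m) + ff (4*m+1))
    = 2 * Apart (4*n) + (2 * ff (4*(n:ℤ)+1) + ff (4*(n:ℤ)+2)) := by
  induction n with
  | zero =>
    norm_num [Apart]
    rw [show (-2:ℤ) = -(2:ℤ) by norm_num, ff_neg, show (-1:ℤ) = -(1:ℤ) by norm_num, ff_neg,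
      show ff 0 = 0 by simp [ff]]
    ring
  | succ n ih =>
    have hc : ((n+1 : ℕ) : ℤ) = (n : ℤ) + 1 := by push_cast; ring
    rw [hc, Icc_succ, Finset.sum_insert (by simp only [Finset.mem_insert, Finset.mem_Icc]; omega),
      Finset.sum_insert (by simp only [Finset.mem_Icc]; omega), ih]
    have h4 : 4*(n+1) = 4*n+1+1+1+1 := by ring
    rw [h4, Apart_succ, Apart_succ, Apart_succ, Apart_succ]
    push_cast
    rw [show 4 * -((n:ℤ) + 1) - 2 = -(4*n+6) by ring, ff_neg,
        show 4 * -((n:ℤ) + 1) - 1 = -(4*n+5) by ring, ff_neg,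
        show 4 * -((n:ℤ) + 1) + 1 = -(4*n+3) by ring, ff_neg,
        show 4 * -((n:ℤ) + 1) = -(4*n+4) by ring, ff_neg,
        show 4 * ((n:ℤ) + 1) - 2 = 4*n+2 by ring,
        show 4 * ((n:ℤ) + 1) - 1 = 4*n+3 by ring,
        show 4 * ((n:ℤ) + 1) = 4*n+4 by ring,
        show 4 * (n:ℤ) + 4 + 1 = 4*n+5 by ring,
        show 4 * (n:ℤ) + 1 + 1 = 4*n+2 by ring,
        show 4 * (n:ℤ) + 2 + 1 = 4*n+3 by ring,
        show 4 * (n:ℤ) + 3 + 1 = 4*n+4 by ring]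
    ring

lemma norm_eval (a b : ℝ) (m : ℤ) :
    euclNorm (![1/2, 1/2, a] - (![1/2, 1/2, b] + (m : ℝ) • ez)) = |a - b - m| := by
  have : (![1/2, 1/2, a] - (![1/2, 1/2, b] + (m : ℝ) • ez)) = ![0, 0, a - b - m] := by
    funext i
    fin_cases i <;> simp [ez] <;> ring
  rw [this]
  simp [euclNorm, Fin.sum_univ_three]
  rw [Real.sqrt_sq_eq_abs]

lemma madPos0 : madPos 0 = ![1/2, 1/2, (1:ℝ)/8] := by simp [madPos]
lemma madPos1 : madPos 1 = ![1/2, 1/2, (3:ℝ)/8] := by simp [madPos]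
lemma madPos2 : madPos 2 = ![1/2, 1/2, (5:ℝ)/8] := by simp [madPos]
lemma madPos3 : madPos 3 = ![1/2, 1/2, (7:ℝ)/8] := by simp [madPos]

lemma term_even {k : ℤ} (hk : k ≠ 0) (h2 : k % 2 = 0) : (1:ℝ) / (|(k:ℝ)|/4) = ff k := by
  rw [ff_even' hk h2, one_div_div]

lemma term_odd {k : ℤ} (h2 : k % 2 = 1) : (-1:ℝ) / (|(k:ℝ)|/4) = ff k := by
  rw [ff_odd' h2, div_div_eq_mul_div]
  norm_num

lemma inner0 (m : ℤ) :
    (∑ s : Fin 4, if s = (0 : Fin 4) ∧ m = 0 then (0:ℝ)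
      else madCharge s / euclNorm (madPos 0 - (madPos s + (m : ℝ) • ez)))
    = ff (4*m) + ff (4*m+1) + ff (4*m+2) + ff (4*m+3) := by
  rw [Fin.sum_univ_four]
  have e0 : (if (0 : Fin 4) = 0 ∧ m = 0 then (0:ℝ)
      else madCharge 0 / euclNorm (madPos 0 - (madPos 0 + (m : ℝ) • ez))) = ff (4*m) := by
    rcases eq_or_ne m 0 with rfl | hm
    · rw [if_pos ⟨rfl, rfl⟩]
      simp [ff]
    · rw [if_neg (by simp [hm]), madPos0, norm_eval,
        show (1:ℝ)/8 - 1/8 - m = -(((4*m : ℤ) : ℝ)/4) by push_cast; ring, abs_neg, abs_div,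
        show |(4:ℝ)| = 4 by norm_num, show madCharge 0 = 1 by simp [madCharge]]
      exact term_even (by omega) (by omega)
  have e1 : (if (1 : Fin 4) = 0 ∧ m = 0 then (0:ℝ)
      else madCharge 1 / euclNorm (madPos 0 - (madPos 1 + (m : ℝ) • ez))) = ff (4*m+1) := by
    rw [if_neg (by simp), madPos0, madPos1, norm_eval,
      show (1:ℝ)/8 - 3/8 - m = -(((4*m+1 : ℤ) : ℝ)/4) by push_cast; ring, abs_neg, abs_div,
      show |(4:ℝ)| = 4 by norm_num, show madCharge 1 = -1 by simp [madCharge]]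
    exact term_odd (by omega)
  have e2 : (if (2 : Fin 4) = 0 ∧ m = 0 then (0:ℝ)
      else madCharge 2 / euclNorm (madPos 0 - (madPos 2 + (m : ℝ) • ez))) = ff (4*m+2) := by
    rw [if_neg (by simp), madPos0, madPos2, norm_eval,
      show (1:ℝ)/8 - 5/8 - m = -(((4*m+2 : ℤ) : ℝ)/4) by push_cast; ring, abs_neg, abs_div,
      show |(4:ℝ)| = 4 by norm_num, show madCharge 2 = 1 by simp [madCharge]]
    exact term_even (by omega) (by omega)
  have e3 : (if (3 : Fin 4) = 0 ∧ m = 0 then (0:ℝ)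
      else madCharge 3 / euclNorm (madPos 0 - (madPos 3 + (m : ℝ) • ez))) = ff (4*m+3) := by
    rw [if_neg (by simp), madPos0, madPos3, norm_eval,
      show (1:ℝ)/8 - 7/8 - m = -(((4*m+3 : ℤ) : ℝ)/4) by push_cast; ring, abs_neg, abs_div,
      show |(4:ℝ)| = 4 by norm_num, show madCharge 3 = -1 by simp [madCharge]]
    exact term_odd (by omega)
  rw [e0, e1, e2, e3]

lemma inner2 (m : ℤ) :
    (∑ s : Fin 4, if s = (2 : Fin 4) ∧ m = 0 then (0:ℝ)
      else madCharge s / euclNorm (madPos 2 - (madPos s + (m : ℝ) • ez)))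
    = ff (4*m-2) + ff (4*m-1) + ff (4*m) + ff (4*m+1) := by
  rw [Fin.sum_univ_four]
  have e0 : (if (0 : Fin 4) = 2 ∧ m = 0 then (0:ℝ)
      else madCharge 0 / euclNorm (madPos 2 - (madPos 0 + (m : ℝ) • ez))) = ff (4*m-2) := by
    rw [if_neg (by simp), madPos0, madPos2, norm_eval,
      show (5:ℝ)/8 - 1/8 - m = -(((4*m-2 : ℤ) : ℝ)/4) by push_cast; ring, abs_neg, abs_div,
      show |(4:ℝ)| = 4 by norm_num, show madCharge 0 = 1 by simp [madCharge]]
    exact term_even (by omega) (by omega)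
  have e1 : (if (1 : Fin 4) = 2 ∧ m = 0 then (0:ℝ)
      else madCharge 1 / euclNorm (madPos 2 - (madPos 1 + (m : ℝ) • ez))) = ff (4*m-1) := by
    rw [if_neg (by simp), madPos1, madPos2, norm_eval,
      show (5:ℝ)/8 - 3/8 - m = -(((4*m-1 : ℤ) : ℝ)/4) by push_cast; ring, abs_neg, abs_div,
      show |(4:ℝ)| = 4 by norm_num, show madCharge 1 = -1 by simp [madCharge]]
    exact term_odd (by omega)
  have e2 : (if (2 : Fin 4) = 2 ∧ m = 0 then (0:ℝ)
      else madCharge 2 / euclNorm (madPos 2 - (madPos 2 + (m : ℝ) • ez))) = ff (4*m) := by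
    rcases eq_or_ne m 0 with rfl | hm
    · rw [if_pos ⟨rfl, rfl⟩]
      simp [ff]
    · rw [if_neg (by simp [hm]), madPos2, norm_eval,
        show (5:ℝ)/8 - 5/8 - m = -(((4*m : ℤ) : ℝ)/4) by push_cast; ring, abs_neg, abs_div,
        show |(4:ℝ)| = 4 by norm_num, show madCharge 2 = 1 by simp [madCharge]]
      exact term_even (by omega) (by omega)
  have e3 : (if (3 : Fin 4) = 2 ∧ m = 0 then (0:ℝ)
      else madCharge 3 / euclNorm (madPos 2 - (madPos 3 + (m : ℝ) • ez))) = ff (4*m+1) := by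
    rw [if_neg (by simp), madPos2, madPos3, norm_eval,
      show (5:ℝ)/8 - 7/8 - m = -(((4*m+1 : ℤ) : ℝ)/4) by push_cast; ring, abs_neg, abs_div,
      show |(4:ℝ)| = 4 by norm_num, show madCharge 3 = -1 by simp [madCharge]]
    exact term_odd (by omega)
  rw [e0, e1, e2, e3]

end Aux

/-- For the alternating charge configuration `(+1,−1,+1,−1)` at `z = (1/8,3/8,5/8,7/8)`
periodically extended in `z`, the potential at either positive charge (index `0` or `2`),
summing over all other charges and all periodic images and excluding the self-term,
equals `4·M_{1D} = −8·ln 2`. -/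
theorem madelung_chain_potential (t : Fin 4) (ht : t = 0 ∨ t = 2) :
    Filter.Tendsto
      (fun n : ℕ => ∑ m ∈ Finset.Icc (-(n : ℤ)) (n : ℤ), ∑ s : Fin 4,
        if s = t ∧ m = 0 then 0
        else madCharge s / euclNorm (madPos t - (madPos s + (m : ℝ) • ez)))
      atTop (nhds (-8 * Real.log 2)) := by
  have hA : Filter.Tendsto (fun n : ℕ => 2 * Apart (4 * n)) atTop (nhds (-8 * Real.log 2)) := by
    have := tendsto_Apart_four.const_mul (2 : ℝ)
    convert this using 2
    ring
  rcases ht with rfl | rfl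
  · have key : ∀ n : ℕ,
        (∑ m ∈ Finset.Icc (-(n : ℤ)) (n : ℤ), ∑ s : Fin 4,
          if s = (0 : Fin 4) ∧ m = 0 then (0:ℝ)
          else madCharge s / euclNorm (madPos 0 - (madPos s + (m : ℝ) • ez)))
        = 2 * Apart (4*n) + (ff (4*(n:ℤ)+1) + ff (4*(n:ℤ)+2) + ff (4*(n:ℤ)+3)) := by
      intro n
      rw [Finset.sum_congr rfl (fun m _ => inner0 m), sum0]
    have htail : Filter.Tendsto
        (fun n : ℕ => ff (4*(n:ℤ)+1) + ff (4*(n:ℤ)+2) + ff (4*(n:ℤ)+3)) atTop (nhds 0) := by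
      have h1 := tendsto_ff_tail 1 (by norm_num)
      have h2 := tendsto_ff_tail 2 (by norm_num)
      have h3 := tendsto_ff_tail 3 (by norm_num)
      have := (h1.add h2).add h3
      norm_num at this ⊢
      exact this
    have := hA.add htail
    rw [add_zero] at this
    exact this.congr (fun n => (key n).symm)
  · have key : ∀ n : ℕ,
        (∑ m ∈ Finset.Icc (-(n : ℤ)) (n : ℤ), ∑ s : Fin 4,
          if s = (2 : Fin 4) ∧ m = 0 then (0:ℝ)
          else madCharge s / euclNorm (madPos 2 - (madPos s + (m : ℝ) • ez)))
        = 2 * Apart (4*n) + (2 * ff (4*(n:ℤ)+1) + ff (4*(n:ℤ)+2)) := by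
      intro n
      rw [Finset.sum_congr rfl (fun m _ => inner2 m), sum2]
    have htail : Filter.Tendsto
        (fun n : ℕ => 2 * ff (4*(n:ℤ)+1) + ff (4*(n:ℤ)+2)) atTop (nhds 0) := by
      have h1 := (tendsto_ff_tail 1 (by norm_num)).const_mul (2:ℝ)
      have h2 := tendsto_ff_tail 2 (by norm_num)
      have := h1.add h2
      norm_num at this ⊢
      exact this
    have := hA.add htail
    rw [add_zero] at this
    exact this.congr (fun n => (key n).symm)
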